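/- Let u be any solution of the equation (‖u'‖^l u')' + ‖A^{1/2}u‖^β A u + g(u') = 0 with u ∈ C¹(ℝ⁺, H) and ‖u'‖^l u' ∈ C¹(ℝ⁺, H). Then the total energy E(t) = ((l+1)/(l+2))‖u'(t)‖^(l+2) + (1/(β+2))‖A^{1/2}u(t)‖^(β+2) is differentiable and satisfies E'(t) = -⟨g(u'(t)), u'(t)⟩ for all t ≥ 0. -/

import Mathlib

open RealInnerProductSpace

private lemma rpow_split {x p q : ℝ} (hx : 0 ≤ x) (hp : 0 < p) (hq : 0 < q) :
    x ^ (p + q) = x ^ p * x ^ q :=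
  Real.rpow_add' hx (by positivity)

theorem stmt_11 {H : Type*} [NormedAddCommGroup H] [InnerProductSpace ℝ H]
    [FiniteDimensional ℝ H]
    (l β : ℝ) (hl : 0 < l) (hβ : 0 < β)
    (A : H →L[ℝ] H)
    (hAsym : ∀ x y : H, ⟪A x, y⟫ = ⟪x, A y⟫)
    (hAcoerc : ∃ lam > (0 : ℝ), ∀ x : H, ⟪A x, x⟫ ≥ lam * ‖x‖ ^ 2)
    (g : H → H) (hg : LocallyLipschitz g)
    (u u' ψ' : ℝ → H)
    (hu : ∀ t ∈ Set.Ici (0 : ℝ), HasDerivWithinAt u (u' t) (Set.Ici 0) t)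
    (hu'c : ContinuousOn u' (Set.Ici 0))
    (hψ : ∀ t ∈ Set.Ici (0 : ℝ),
      HasDerivWithinAt (fun t => ‖u' t‖ ^ l • u' t) (ψ' t) (Set.Ici 0) t)
    (hψ'c : ContinuousOn ψ' (Set.Ici 0))
    (heq : ∀ t ∈ Set.Ici (0 : ℝ),
      ψ' t + (Real.sqrt ⟪A (u t), u t⟫) ^ β • A (u t) + g (u' t) = 0) :
    ∀ t ∈ Set.Ici (0 : ℝ),
      HasDerivWithinAt
        (fun t => ((l + 1) / (l + 2)) * ‖u' t‖ ^ (l + 2)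
          + (1 / (β + 2)) * (Real.sqrt ⟪A (u t), u t⟫) ^ (β + 2))
        (-⟪g (u' t), u' t⟫) (Set.Ici 0) t := by
  intro t ht
  have hl1 : (0:ℝ) < l + 1 := by linarith
  have hl2 : (0:ℝ) < l + 2 := by linarith
  have hb2 : (0:ℝ) < β + 2 := by linarith
  set ψ : ℝ → H := fun s => ‖u' s‖ ^ l • u' s with hψdef
  have hnψ : ∀ s, ‖ψ s‖ = ‖u' s‖ ^ (l + 1) := by
    intro s
    rw [hψdef]
    simp only [norm_smul, Real.norm_eq_abs,
      abs_of_nonneg (Real.rpow_nonneg (norm_nonneg _) _)]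
    rw [rpow_split (norm_nonneg _) hl one_pos, Real.rpow_one]
  -- Kinetic part
  have hK : HasDerivWithinAt (fun s => ((l + 1) / (l + 2)) * ‖u' s‖ ^ (l + 2))
      ⟪ψ' t, u' t⟫ (Set.Ici 0) t := by
    by_cases hz : u' t = 0
    · have h0 : HasDerivWithinAt (fun s => ((l + 1) / (l + 2)) * ‖u' s‖ ^ (l + 2))
          0 (Set.Ici 0) t := by
        rw [hasDerivWithinAt_iff_isLittleO]
        have hψt : ψ t = 0 := by simp [hψdef, hz]
        simp only [hz, norm_zero, Real.zero_rpow (by positivity : l + 2 ≠ 0), mul_zero,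
          sub_zero, smul_zero]
        -- ψ = O(s - t)
        have hbig : (fun s => ψ s) =O[nhdsWithin t (Set.Ici 0)] fun s => s - t := by
          have := (hψ t ht).hasFDerivWithinAt.isBigO_sub
          simpa [hψt] using this
        have hn : (fun s => ‖ψ s‖) =O[nhdsWithin t (Set.Ici 0)] fun s => s - t :=
          hbig.norm_left
        set e : ℝ := (l + 2) / (l + 1) with he
        have he1 : 0 < e - 1 := sub_pos.mpr (by rw [he, lt_div_iff₀ hl1]; linarith)
        have hψcont : ContinuousOn ψ (Set.Ici 0) := fun x hx =>
          (hψ x hx).continuousWithinAt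
        have h1 : Filter.Tendsto (fun s => ‖ψ s‖) (nhdsWithin t (Set.Ici 0)) (nhds 0) := by
          have h := (hψcont t ht).norm
          have h' := h.tendsto
          rwa [hψt, norm_zero] at h'
        have h2 : ContinuousAt (fun x : ℝ => x ^ (e - 1)) 0 :=
          Real.continuousAt_rpow_const 0 (e - 1) (Or.inr he1.le)
        have htend : Filter.Tendsto (fun s => ‖ψ s‖ ^ (e - 1))
            (nhdsWithin t (Set.Ici 0)) (nhds 0) := by
          have := h2.tendsto.comp h1
          simpa [Function.comp_def, Real.zero_rpow he1.ne'] using this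
        have hsmall : (fun s => ‖ψ s‖ ^ (e - 1)) =o[nhdsWithin t (Set.Ici 0)]
            (fun _ => (1:ℝ)) := (Asymptotics.isLittleO_one_iff ℝ).mpr htend
        have hprod := hn.mul_isLittleO hsmall
        have hfe : ∀ s, ‖u' s‖ ^ (l + 2) = ‖ψ s‖ * ‖ψ s‖ ^ (e - 1) := by
          intro s
          rw [hnψ s, ← Real.rpow_mul (norm_nonneg _),
            ← rpow_split (norm_nonneg _) hl1 (mul_pos hl1 he1)]
          congr 1
          rw [he]; field_simp; ring
        have hkey : (fun s => ‖u' s‖ ^ (l + 2)) =o[nhdsWithin t (Set.Ici 0)]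
            fun s => s - t := by
          refine hprod.congr' ?_ ?_
          · filter_upwards with s; exact (hfe s).symm
          · filter_upwards with s; ring
        exact hkey.const_mul_left ((l + 1) / (l + 2))
      have hzero : ⟪ψ' t, u' t⟫ = (0:ℝ) := by simp [hz]
      rw [hzero]; exact h0
    · -- u' t ≠ 0
      have hnpos : 0 < ‖u' t‖ := norm_pos_iff.mpr hz
      set α : ℝ := (l + 2) / (2 * (l + 1)) with hα
      have hNval : ∀ s, ⟪ψ s, ψ s⟫ = ‖u' s‖ ^ (2 * l + 2) := by
        intro s
        rw [real_inner_self_eq_norm_mul_norm, hnψ s,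
          ← rpow_split (norm_nonneg _) hl1 hl1]
        congr 1
        ring
      have hN : HasDerivWithinAt (fun s => ⟪ψ s, ψ s⟫) (2 * ⟪ψ' t, ψ t⟫)
          (Set.Ici 0) t := by
        have h := HasDerivWithinAt.inner ℝ (hψ t ht) (hψ t ht)
        refine h.congr_deriv (Eq.symm ?_)
        rw [real_inner_comm (ψ t)]; ring
      have hNt : ⟪ψ t, ψ t⟫ ≠ (0:ℝ) := by
        rw [hNval]
        exact (Real.rpow_pos_of_pos hnpos _).ne'
      have h2 := (hN.rpow_const (p := α) (Or.inl hNt)).const_mul ((l + 1) / (l + 2))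
      have hfun : (fun s => ((l + 1) / (l + 2)) * ‖u' s‖ ^ (l + 2))
          = fun s => ((l + 1) / (l + 2)) * ⟪ψ s, ψ s⟫ ^ α := by
        funext s
        rw [hNval, ← Real.rpow_mul (norm_nonneg _)]
        congr 2
        rw [hα]; field_simp
      rw [hfun]
      refine h2.congr_deriv (Eq.symm ?_)
      have hinner : ⟪ψ' t, ψ t⟫ = ‖u' t‖ ^ l * ⟪ψ' t, u' t⟫ := by
        rw [hψdef]; simp [real_inner_smul_right]
      have hpow : (⟪ψ t, ψ t⟫ : ℝ) ^ (α - 1) = ‖u' t‖ ^ (-l) := by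
        rw [hNval, ← Real.rpow_mul (norm_nonneg _)]
        congr 1
        rw [hα]; field_simp; ring
      rw [hinner, hpow]
      have hll : ‖u' t‖ ^ l * ‖u' t‖ ^ (-l) = 1 := by
        rw [← Real.rpow_add hnpos]; simp
      have hcoef : (l + 1) / (l + 2) * (2 * α) = 1 := by
        rw [hα]; field_simp
      calc ⟪ψ' t, u' t⟫
          = ((l + 1) / (l + 2) * (2 * α)) * (‖u' t‖ ^ l * ‖u' t‖ ^ (-l)) * ⟪ψ' t, u' t⟫ := by
            rw [hcoef, hll]; ring
        _ = (l + 1) / (l + 2) * (2 * (‖u' t‖ ^ l * ⟪ψ' t, u' t⟫) * α * ‖u' t‖ ^ (-l)) := by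
            ring
  -- Potential part
  have hQnn : ∀ x : H, (0:ℝ) ≤ ⟪A x, x⟫ := by
    intro x
    obtain ⟨lam, hlam, hco⟩ := hAcoerc
    have := hco x
    nlinarith [sq_nonneg ‖x‖]
  have hAu : HasDerivWithinAt (fun s => A (u s)) (A (u' t)) (Set.Ici 0) t :=
    (A.hasFDerivAt).comp_hasDerivWithinAt t (hu t ht)
  have hQd : HasDerivWithinAt (fun s => ⟪A (u s), u s⟫) (2 * ⟪A (u t), u' t⟫)
      (Set.Ici 0) t := by
    have h := HasDerivWithinAt.inner ℝ hAu (hu t ht)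
    refine h.congr_deriv (Eq.symm ?_)
    linarith [hAsym (u' t) (u t), real_inner_comm (u' t) (A (u t))]
  set γ : ℝ := (β + 2) / 2 with hγ
  have hγ1 : (1:ℝ) ≤ γ := by
    rw [hγ, le_div_iff₀ two_pos]; linarith
  have hP0 := (hQd.rpow_const (Or.inr hγ1)).const_mul (1 / (β + 2))
  have hfunP : (fun s => (1 / (β + 2)) * (Real.sqrt ⟪A (u s), u s⟫) ^ (β + 2))
      = fun s => (1 / (β + 2)) * (⟪A (u s), u s⟫ : ℝ) ^ γ := by
    funext s
    rw [Real.sqrt_eq_rpow, ← Real.rpow_mul (hQnn _)]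
    congr 2
    rw [hγ]; ring
  have hP : HasDerivWithinAt
      (fun s => (1 / (β + 2)) * (Real.sqrt ⟪A (u s), u s⟫) ^ (β + 2))
      ((Real.sqrt ⟪A (u t), u t⟫) ^ β * ⟪A (u t), u' t⟫) (Set.Ici 0) t := by
    rw [hfunP]
    refine hP0.congr_deriv (Eq.symm ?_)
    rw [Real.sqrt_eq_rpow, ← Real.rpow_mul (hQnn _),
      show (1:ℝ) / 2 * β = γ - 1 by rw [hγ]; ring]
    rw [hγ]
    have hb2' : (β + 2) ≠ 0 := hb2.ne'
    field_simp
  -- Combine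
  have hsum := hK.add hP
  refine hsum.congr_deriv (Eq.symm ?_)
  have hin : ⟪ψ' t, u' t⟫ + (Real.sqrt ⟪A (u t), u t⟫) ^ β * ⟪A (u t), u' t⟫
      + ⟪g (u' t), u' t⟫ = 0 := by
    have h := congrArg (fun v => (⟪v, u' t⟫ : ℝ)) (heq t ht)
    simpa [inner_add_left, real_inner_smul_left] using h
  linarith
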